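/- With Γ_{2k-1}(x)=2T_{2k-1}(x/2) and p_j(x)=U_j(x/2)-(1/(d1-1))U_{j-2}(x/2), one has the polynomial identity Γ_{2k-1}(x) = p_{2k-1}(x) - (d1-2)·( p_{2k-3}(x)/(d1-1) + p_{2k-5}(x)/(d1-1)^2 + ... + p_1(x)/(d1-1)^{k-1} ) for every k ≥ 1 and d1 ≥ 2. -/

import Mathlib

open Polynomial

/-- `p_k(x) = U_k(x/2) - (1/(d1-1))·U_{k-2}(x/2)`. -/
noncomputable def pPoly (d1 : ℕ) (k : ℤ) : Polynomial ℝ :=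
  (Polynomial.Chebyshev.U ℝ k).comp (Polynomial.C (1 / 2) * Polynomial.X) -
    Polynomial.C (1 / ((d1 : ℝ) - 1)) *
      ((Polynomial.Chebyshev.U ℝ (k - 2)).comp (Polynomial.C (1 / 2) * Polynomial.X))

/-- `Γ_{2k-1}(x) = 2T_{2k-1}(x/2)`. -/
noncomputable def gammaOdd (k : ℕ) : Polynomial ℝ :=
  (2 : Polynomial ℝ) *
    (Polynomial.Chebyshev.T ℝ (2 * k - 1 : ℤ)).comp (Polynomial.C (1 / 2) * Polynomial.X)

lemma sum_Icc_one_eq_range {M : Type*} [AddCommMonoid M] (m : ℕ) (f : ℕ → M) :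
    ∑ j ∈ Finset.Icc 1 m, f j = ∑ i ∈ Finset.range m, f (i + 1) := by
  induction m with
  | zero => simp
  | succ m ih => rw [Finset.sum_Icc_succ_top (by omega), Finset.sum_range_succ, ih]

lemma two_T_eq (n : ℤ) :
    (2 : Polynomial ℝ) * Polynomial.Chebyshev.T ℝ n
      = Polynomial.Chebyshev.U ℝ n - Polynomial.Chebyshev.U ℝ (n - 2) := by
  rw [Polynomial.Chebyshev.U_sub_two, Polynomial.Chebyshev.T_eq_U_sub_X_mul_U]
  ring

lemma gammaOdd_eq (k : ℕ) :
    gammaOdd k =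
      (Polynomial.Chebyshev.U ℝ (2 * (k : ℤ) - 1)).comp (Polynomial.C (1 / 2) * Polynomial.X)
        - (Polynomial.Chebyshev.U ℝ (2 * (k : ℤ) - 3)).comp
            (Polynomial.C (1 / 2) * Polynomial.X) := by
  unfold gammaOdd
  have := two_T_eq (2 * (k : ℤ) - 1)
  have h2 : (2 * (k : ℤ) - 1) - 2 = 2 * (k : ℤ) - 3 := by ring
  rw [h2] at this
  calc (2 : Polynomial ℝ) * (Polynomial.Chebyshev.T ℝ (2 * k - 1 : ℤ)).comp
        (Polynomial.C (1 / 2) * Polynomial.X)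
      = ((2 : Polynomial ℝ) * Polynomial.Chebyshev.T ℝ (2 * k - 1 : ℤ)).comp
        (Polynomial.C (1 / 2) * Polynomial.X) := by simp [Polynomial.mul_comp]
    _ = _ := by rw [this, Polynomial.sub_comp]

/-- The polynomial identity
`Γ_{2k-1} = p_{2k-1} - (d1-2)·( p_{2k-3}/(d1-1) + p_{2k-5}/(d1-1)² + … + p_1/(d1-1)^{k-1} )`
for every `k ≥ 1` and `d1 ≥ 2`. -/
theorem stmt_9 (d1 : ℕ) (hd1 : 2 ≤ d1) (k : ℕ) (hk : 1 ≤ k) :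
    gammaOdd k =
      pPoly d1 (2 * (k : ℤ) - 1) -
        Polynomial.C ((d1 : ℝ) - 2) *
          ∑ j ∈ Finset.Icc 1 (k - 1),
            Polynomial.C (1 / ((d1 : ℝ) - 1) ^ j) *
              pPoly d1 (2 * (k : ℤ) - 1 - 2 * (j : ℤ)) := by
  have hq : ((d1 : ℝ) - 1) ≠ 0 := by
    have : (2 : ℝ) ≤ (d1 : ℝ) := by exact_mod_cast hd1
    linarith
  induction k, hk using Nat.le_induction with
  | base =>
    simp only [Nat.cast_one, show (1:ℕ) - 1 = 0 from rfl,
      show Finset.Icc 1 0 = (∅ : Finset ℕ) from rfl, Finset.sum_empty, mul_zero, sub_zero]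
    rw [gammaOdd_eq]
    unfold pPoly
    push_cast
    simp [Polynomial.Chebyshev.U_neg_one]
  | succ n hn ih =>
    have key : gammaOdd (n + 1)
        = pPoly d1 (2 * (n : ℤ) + 1) - pPoly d1 (2 * (n : ℤ) - 1)
          + Polynomial.C (1 / ((d1 : ℝ) - 1)) * gammaOdd n := by
      rw [gammaOdd_eq, gammaOdd_eq]
      unfold pPoly
      push_cast
      have e1 : (2 * ((n : ℤ) + 1) - 1) = 2 * (n : ℤ) + 1 := by ring
      have e2 : (2 * ((n : ℤ) + 1) - 3) = 2 * (n : ℤ) - 1 := by ring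
      have e3 : (2 * (n : ℤ) + 1 - 2) = 2 * (n : ℤ) - 1 := by ring
      have e4 : (2 * (n : ℤ) - 1 - 2) = 2 * (n : ℤ) - 3 := by ring
      rw [e1, e2, e3, e4]
      ring
    rw [key, ih]
    have hsum : ∑ j ∈ Finset.Icc 1 (n + 1 - 1),
          Polynomial.C (1 / ((d1 : ℝ) - 1) ^ j) *
            pPoly d1 (2 * ((n + 1 : ℕ) : ℤ) - 1 - 2 * (j : ℤ))
        = Polynomial.C (1 / ((d1 : ℝ) - 1)) * pPoly d1 (2 * (n : ℤ) - 1)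
          + Polynomial.C (1 / ((d1 : ℝ) - 1)) *
            ∑ j ∈ Finset.Icc 1 (n - 1),
              Polynomial.C (1 / ((d1 : ℝ) - 1) ^ j) *
                pPoly d1 (2 * (n : ℤ) - 1 - 2 * (j : ℤ)) := by
      obtain ⟨m, rfl⟩ : ∃ m, n = m + 1 := ⟨n - 1, by omega⟩
      rw [Nat.add_sub_cancel, Nat.add_sub_cancel, Finset.mul_sum,
        sum_Icc_one_eq_range, sum_Icc_one_eq_range, Finset.sum_range_succ']
      rw [add_comm]
      congr 1
      · have harg : (2 * ((m + 1 + 1 : ℕ) : ℤ) - 1 - 2 * ((0 + 1 : ℕ) : ℤ))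
            = 2 * ((m + 1 : ℕ) : ℤ) - 1 := by push_cast; ring
        rw [harg]
        congr 1
        simp
      · refine Finset.sum_congr rfl fun i _ => ?_
        have harg : (2 * ((m + 1 + 1 : ℕ) : ℤ) - 1 - 2 * ((i + 1 + 1 : ℕ) : ℤ))
            = 2 * ((m + 1 : ℕ) : ℤ) - 1 - 2 * ((i + 1 : ℕ) : ℤ) := by push_cast; ring
        rw [harg, ← mul_assoc, ← Polynomial.C_mul]
        congr 2
        rw [pow_succ]
        field_simp
    rw [hsum]
    have hab : Polynomial.C ((d1 : ℝ) - 2) * Polynomial.C (1 / ((d1 : ℝ) - 1))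
        = 1 - Polynomial.C (1 / ((d1 : ℝ) - 1)) := by
      rw [← Polynomial.C_mul, ← Polynomial.C_1, ← Polynomial.C_sub]
      congr 1
      field_simp
      ring
    have hcast : (2 * ((n + 1 : ℕ) : ℤ) - 1) = 2 * (n : ℤ) + 1 := by push_cast; ring
    rw [hcast]
    linear_combination (pPoly d1 (2 * (n : ℤ) - 1)) * hab
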